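/- (SR and RS updates have identical marginals on product distributions) Let W be any fitness matrix and let P be a product population distribution, i.e. p_{ij} = x_i(P)·y_j(P) for all i,j. Then for any recombination rates r, r' ∈ [0,1] and every i ∈ [n], Σ_j (SR_r(P))_{ij} = Σ_j (RS_{r'}(P))_{ij} = x_i(P)·(Σ_j y_j(P) w_{ij}) / w̄(P), and symmetrically for every j ∈ [m], Σ_i (SR_r(P))_{ij} = Σ_i (RS_{r'}(P))_{ij} = y_j(P)·(Σ_i x_i(P) w_{ij}) / w̄(P). -/

import Mathlib

open Finset

noncomputable section

/-- `P` is a population distribution: nonnegative entries summing to 1. -/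
def IsPopDist {n m : ℕ} (P : Fin n → Fin m → ℝ) : Prop :=
  (∀ i j, 0 ≤ P i j) ∧ (∑ i, ∑ j, P i j) = 1

/-- `W` is a fitness matrix: strictly positive entries. -/
def IsFitness {n m : ℕ} (W : Fin n → Fin m → ℝ) : Prop :=
  ∀ i j, 0 < W i j

/-- Average fitness w̄(P) = Σ_{i,j} p_{ij} w_{ij}. -/
def wbar {n m : ℕ} (W P : Fin n → Fin m → ℝ) : ℝ :=
  ∑ i, ∑ j, P i j * W i j

/-- First marginal x_i(P) = Σ_j p_{ij}. -/
def xmarg {n m : ℕ} (P : Fin n → Fin m → ℝ) (i : Fin n) : ℝ :=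
  ∑ j, P i j

/-- Second marginal y_j(P) = Σ_i p_{ij}. -/
def ymarg {n m : ℕ} (P : Fin n → Fin m → ℝ) (j : Fin m) : ℝ :=
  ∑ i, P i j

/-- Selection update p^S_{ij} = p_{ij} w_{ij} / w̄(P). -/
def pS {n m : ℕ} (W P : Fin n → Fin m → ℝ) (i : Fin n) (j : Fin m) : ℝ :=
  P i j * W i j / wbar W P

/-- Recombination-after-selection matrix
  p^{SR}_{ij} = (Σ_l p_{il} w_{il})(Σ_k p_{kj} w_{kj}) / w̄(P)². -/
def pSR {n m : ℕ} (W P : Fin n → Fin m → ℝ) (i : Fin n) (j : Fin m) : ℝ :=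
  (∑ l, P i l * W i l) * (∑ k, P k j * W k j) / (wbar W P) ^ 2

/-- SR update: r·p^{SR}_{ij} + (1−r)·p^S_{ij}. -/
def SRupd {n m : ℕ} (W P : Fin n → Fin m → ℝ) (r : ℝ) (i : Fin n) (j : Fin m) : ℝ :=
  r * pSR W P i j + (1 - r) * pS W P i j

/-- Conditional expected fitness g_i(P) = Σ_j (p_{ij}/x_i(P)) w_{ij}. -/
def gcond {n m : ℕ} (W P : Fin n → Fin m → ℝ) (i : Fin n) : ℝ :=
  ∑ j, (P i j / xmarg P i) * W i j

/-- Marginal expected fitness G_i(P) = Σ_j y_j(P) w_{ij}. -/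
def Gmarg {n m : ℕ} (W P : Fin n → Fin m → ℝ) (i : Fin n) : ℝ :=
  ∑ j, ymarg P j * W i j

/-- Normalizer w̄^R(P) = Σ_{i,j} w_{ij}(r·x_i y_j + (1−r)·p_{ij}). -/
def wbarR {n m : ℕ} (W P : Fin n → Fin m → ℝ) (r : ℝ) : ℝ :=
  ∑ i, ∑ j, W i j * (r * xmarg P i * ymarg P j + (1 - r) * P i j)

/-- RS update: w_{ij}(r·x_i y_j + (1−r)·p_{ij}) / w̄^R(P). -/
def RSupd {n m : ℕ} (W P : Fin n → Fin m → ℝ) (r : ℝ) (i : Fin n) (j : Fin m) : ℝ :=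
  W i j * (r * xmarg P i * ymarg P j + (1 - r) * P i j) / wbarR W P r

/-- SR and RS updates have identical marginals on product distributions. -/
theorem sr_rs_same_marginals_on_product (n m : ℕ) (hn : 1 ≤ n) (hm : 1 ≤ m)
    (W P : Fin n → Fin m → ℝ) (hW : IsFitness W) (hP : IsPopDist P)
    (hprod : ∀ i j, P i j = xmarg P i * ymarg P j) :
    ∀ r ∈ Set.Icc (0 : ℝ) 1, ∀ r' ∈ Set.Icc (0 : ℝ) 1,
      (∀ i, ∑ j, SRupd W P r i j = xmarg P i * (∑ j, ymarg P j * W i j) / wbar W P ∧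
            ∑ j, RSupd W P r' i j = xmarg P i * (∑ j, ymarg P j * W i j) / wbar W P) ∧
      (∀ j, ∑ i, SRupd W P r i j = ymarg P j * (∑ i, xmarg P i * W i j) / wbar W P ∧
            ∑ i, RSupd W P r' i j = ymarg P j * (∑ i, xmarg P i * W i j) / wbar W P) := by
  -- wbar is positive
  have hex : ∃ i j, 0 < P i j := by
    by_contra h
    push_neg at h
    have hz : ∀ i j, P i j = 0 := fun i j => le_antisymm (h i j) (hP.1 i j)
    have : (∑ i, ∑ j, P i j) = 0 := by simp [hz]
    rw [hP.2] at this; exact one_ne_zero this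
  have hwpos : 0 < wbar W P := by
    obtain ⟨i0, j0, h0⟩ := hex
    have hin : 0 < ∑ j, P i0 j * W i0 j :=
      Finset.sum_pos' (fun j _ => mul_nonneg (hP.1 _ _) (hW _ _).le)
        ⟨j0, Finset.mem_univ _, mul_pos h0 (hW _ _)⟩
    exact Finset.sum_pos'
      (fun i _ => Finset.sum_nonneg fun j _ => mul_nonneg (hP.1 _ _) (hW _ _).le)
      ⟨i0, Finset.mem_univ _, hin⟩
  have hw0 : wbar W P ≠ 0 := hwpos.ne'
  intro r hr r' hr'
  -- sum over columns of selected matrix equals wbar (swapped order)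
  have hcomm : ∑ j, ∑ k, P k j * W k j = wbar W P := by
    rw [wbar, Finset.sum_comm]
  have hcomm' : ∑ i, ∑ l, P i l * W i l = wbar W P := rfl
  -- on product distributions, wbarR = wbar
  have hwR : wbarR W P r' = wbar W P := by
    unfold wbarR wbar
    refine Finset.sum_congr rfl fun i _ => Finset.sum_congr rfl fun j _ => ?_
    rw [hprod i j]; ring
  have hRS : ∀ i j, RSupd W P r' i j = P i j * W i j / wbar W P := by
    intro i j
    unfold RSupd
    rw [hwR, hprod i j]; ring
  -- structure of row sums
  have hA : ∀ i, ∑ j, P i j * W i j = xmarg P i * ∑ j, ymarg P j * W i j := by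
    intro i
    rw [Finset.mul_sum]
    exact Finset.sum_congr rfl fun j _ => by rw [hprod i j]; ring
  have hB : ∀ j, ∑ i, P i j * W i j = ymarg P j * ∑ i, xmarg P i * W i j := by
    intro j
    rw [Finset.mul_sum]
    exact Finset.sum_congr rfl fun i _ => by rw [hprod i j]; ring
  have hSRrow : ∀ i, ∑ j, SRupd W P r i j = (∑ j, P i j * W i j) / wbar W P := by
    intro i
    have e1 : ∑ j, pSR W P i j = (∑ j, P i j * W i j) / wbar W P := by
      unfold pSR
      rw [← Finset.sum_div, ← Finset.mul_sum, hcomm]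
      field_simp
    have e2 : ∑ j, pS W P i j = (∑ j, P i j * W i j) / wbar W P := by
      unfold pS
      rw [← Finset.sum_div]
    unfold SRupd
    rw [Finset.sum_add_distrib, ← Finset.mul_sum, ← Finset.mul_sum, e1, e2]
    ring
  have hSRcol : ∀ j, ∑ i, SRupd W P r i j = (∑ i, P i j * W i j) / wbar W P := by
    intro j
    have e1 : ∑ i, pSR W P i j = (∑ i, P i j * W i j) / wbar W P := by
      unfold pSR
      rw [← Finset.sum_div, ← Finset.sum_mul, hcomm']
      field_simp
    have e2 : ∑ i, pS W P i j = (∑ i, P i j * W i j) / wbar W P := by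
      unfold pS
      rw [← Finset.sum_div]
    unfold SRupd
    rw [Finset.sum_add_distrib, ← Finset.mul_sum, ← Finset.mul_sum, e1, e2]
    ring
  refine ⟨fun i => ?_, fun j => ?_⟩
  · constructor
    · rw [hSRrow i, hA i, mul_div_assoc]
    · simp only [hRS]
      rw [← Finset.sum_div, hA i, mul_div_assoc]
  · constructor
    · rw [hSRcol j, hB j, mul_div_assoc]
    · simp only [hRS]
      rw [← Finset.sum_div, hB j, mul_div_assoc]
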